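/- Let f,g∈ℋ with f(x)≥g(x) for all x∈[0,1] and f≠g. Then g(c_g)/c_g < f(c_f)/c_f. -/

import Mathlib

open Set Polynomial

/-- The class ℋ: nonzero real polynomials of degree at most 3 with `f(0)=f(1)=0`,
nonnegative on `[0,1]`, and with exactly one critical point `c` in `[0,1]`. -/
structure HClass (f : Polynomial ℝ) (c : ℝ) : Prop where
  deg : f.degree ≤ 3
  ne0 : f ≠ 0
  f0 : f.eval 0 = 0
  f1 : f.eval 1 = 0
  nonneg : ∀ x ∈ Set.Icc (0:ℝ) 1, 0 ≤ f.eval x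
  hc : c ∈ Set.Icc (0:ℝ) 1
  crit : f.derivative.eval c = 0
  uniq : ∀ y ∈ Set.Icc (0:ℝ) 1, f.derivative.eval y = 0 → y = c

set_option maxHeartbeats 2000000 in
lemma hclass_facts (f : Polynomial ℝ) (c : ℝ) (hf : HClass f c) :
    ∃ a b : ℝ, (∀ x : ℝ, f.eval x = x * (1 - x) * (a + b * x)) ∧
      1/3 < c ∧ c < 2/3 ∧ 0 < (1 - c) * (a + b * c) ∧
      a * (1 - c)^2 = (1 - c) * (a + b * c) * (2 - 3*c) ∧
      b * c * (1 - c)^2 = (1 - c) * (a + b * c) * (2*c - 1) := by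
  have hnd : f.natDegree ≤ 3 := natDegree_le_iff_degree_le.mpr hf.deg
  have hnd4 : f.natDegree < 4 := by omega
  have hEval : ∀ x : ℝ, f.eval x =
      f.coeff 0 + f.coeff 1 * x + f.coeff 2 * x^2 + f.coeff 3 * x^3 := by
    intro x
    rw [eval_eq_sum_range' hnd4]
    simp [Finset.sum_range_succ]
  have h0 : f.coeff 0 = 0 := by
    have := hf.f0; rw [hEval 0] at this; linarith [this]
  have h1 : f.coeff 0 + f.coeff 1 + f.coeff 2 + f.coeff 3 = 0 := by
    have := hf.f1; rw [hEval 1] at this; linarith [this]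
  set a : ℝ := f.coeff 1 with ha
  set b : ℝ := -f.coeff 3 with hb
  have hc2 : f.coeff 2 = b - a := by rw [hb, ha]; linarith
  have hc3 : f.coeff 3 = -b := by rw [hb]; ring
  have hF : ∀ x : ℝ, f.eval x = x * (1 - x) * (a + b * x) := by
    intro x; rw [hEval x, h0, hc2, hc3]; ring
  -- derivative formula
  have hndd : f.derivative.natDegree < 4 :=
    lt_of_le_of_lt (natDegree_derivative_le f) (by omega)
  have hc4 : f.coeff 4 = 0 := coeff_eq_zero_of_natDegree_lt (by omega)
  have hD : ∀ x : ℝ, f.derivative.eval x = a + 2*(b - a)*x - 3*b*x^2 := by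
    intro x
    rw [eval_eq_sum_range' hndd]
    simp [Finset.sum_range_succ, coeff_derivative, hc4, hc2, hc3]
    ring
  -- max point
  have hcont : Continuous fun x : ℝ => f.eval x := f.continuous_aeval
  obtain ⟨m, hm, hmax⟩ := isCompact_Icc.exists_isMaxOn
    (Set.nonempty_Icc.mpr (by norm_num : (0:ℝ) ≤ 1)) hcont.continuousOn
  have hmax' : ∀ x ∈ Set.Icc (0:ℝ) 1, f.eval x ≤ f.eval m := fun x hx => hmax hx
  have hmpos : 0 < f.eval m := by
    by_contra h
    push_neg at h
    apply hf.ne0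
    apply Polynomial.eq_zero_of_infinite_isRoot
    apply Set.Infinite.mono (s := Set.Icc (0:ℝ) 1)
    · intro x hx
      have h1 := hmax' x hx
      have h2 := hf.nonneg x hx
      exact le_antisymm (h1.trans h) h2
    · exact Set.Icc_infinite (by norm_num)
  have hm0 : m ≠ 0 := by intro h; rw [h, hf.f0] at hmpos; exact lt_irrefl 0 hmpos
  have hm1 : m ≠ 1 := by intro h; rw [h, hf.f1] at hmpos; exact lt_irrefl 0 hmpos
  have hm01 : m ∈ Set.Ioo (0:ℝ) 1 :=
    ⟨lt_of_le_of_ne hm.1 (Ne.symm hm0), lt_of_le_of_ne hm.2 hm1⟩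
  have hlm : IsLocalMax (fun x : ℝ => f.eval x) m :=
    hmax.isLocalMax (Icc_mem_nhds hm01.1 hm01.2)
  have hdm : f.derivative.eval m = 0 := by
    rw [← Polynomial.deriv]; exact hlm.deriv_eq_zero
  have hmc : m = c := hf.uniq m hm hdm
  have hc0 : 0 < c := hmc ▸ hm01.1
  have hc1 : c < 1 := hmc ▸ hm01.2
  have hfc : 0 < f.eval c := hmc ▸ hmpos
  have hdcont : Continuous fun x : ℝ => f.derivative.eval x := f.derivative.continuous_aeval
  -- a > 0
  have ha0 : f.derivative.eval 0 = a := by rw [hD 0]; ring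
  have ha1 : f.derivative.eval 1 = -a - b := by rw [hD 1]; ring
  have hapos : 0 < a := by
    rcases lt_trichotomy a 0 with h | h | h
    · exfalso
      have hneg : ∀ y ∈ Set.Ico (0:ℝ) c, f.derivative.eval y < 0 := by
        intro y hy
        rcases lt_trichotomy (f.derivative.eval y) 0 with h' | h' | h'
        · exact h'
        · exact absurd (hf.uniq y ⟨hy.1, hy.2.le.trans hc1.le⟩ h') (ne_of_lt hy.2)
        · exfalso
          have hsub : Set.Icc (0:ℝ) y ⊆ Set.Icc 0 1 :=
            Set.Icc_subset_Icc le_rfl (hy.2.le.trans hc1.le)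
          have himg := intermediate_value_Icc hy.1 (hdcont.continuousOn)
          have : (0:ℝ) ∈ Set.Icc (f.derivative.eval 0) (f.derivative.eval y) := by
            rw [ha0]; exact ⟨h.le, h'.le⟩
          obtain ⟨z, hz, hz0⟩ := himg this
          have hzc : z = c := hf.uniq z (hsub hz) hz0
          have : z < c := lt_of_le_of_lt hz.2 hy.2
          rw [hzc] at this; exact lt_irrefl c this
      have hanti : StrictAntiOn (fun x : ℝ => f.eval x) (Set.Icc 0 c) := by
        apply strictAntiOn_of_deriv_neg (convex_Icc 0 c) hcont.continuousOn
        intro y hy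
        rw [interior_Icc] at hy
        rw [Polynomial.deriv]
        exact hneg y ⟨hy.1.le, hy.2⟩
      have := hanti (Set.left_mem_Icc.mpr hc0.le) (Set.right_mem_Icc.mpr hc0.le) hc0
      simp only [hf.f0] at this
      linarith
    · exfalso
      have : (0:ℝ) = c := hf.uniq 0 ⟨le_rfl, by norm_num⟩ (by rw [ha0, h])
      linarith
    · exact h
  have habpos : 0 < a + b := by
    rcases lt_trichotomy (a + b) 0 with h | h | h
    · exfalso
      have hpos : ∀ y ∈ Set.Ioc c 1, 0 < f.derivative.eval y := by
        intro y hy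
        rcases lt_trichotomy (f.derivative.eval y) 0 with h' | h' | h'
        · exfalso
          have hsub : Set.Icc y 1 ⊆ Set.Icc 0 1 :=
            Set.Icc_subset_Icc (hc0.le.trans hy.1.le) le_rfl
          have himg := intermediate_value_Icc hy.2 (hdcont.continuousOn)
          have hmem : (0:ℝ) ∈ Set.Icc (f.derivative.eval y) (f.derivative.eval 1) := by
            rw [ha1]; exact ⟨h'.le, by linarith⟩
          obtain ⟨z, hz, hz0⟩ := himg hmem
          have hzc : z = c := hf.uniq z (hsub hz) hz0
          have : c < z := lt_of_lt_of_le hy.1 hz.1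
          rw [hzc] at this; exact lt_irrefl c this
        · exact absurd (hf.uniq y ⟨hc0.le.trans hy.1.le, hy.2⟩ h') (ne_of_gt hy.1)
        · exact h'
      have hmono : StrictMonoOn (fun x : ℝ => f.eval x) (Set.Icc c 1) := by
        apply strictMonoOn_of_deriv_pos (convex_Icc c 1) hcont.continuousOn
        intro y hy
        rw [interior_Icc] at hy
        rw [Polynomial.deriv]
        exact hpos y ⟨hy.1, hy.2.le⟩
      have := hmono (Set.left_mem_Icc.mpr hc1.le) (Set.right_mem_Icc.mpr hc1.le) hc1
      simp only [hf.f1] at this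
      linarith
    · exfalso
      have : (1:ℝ) = c := hf.uniq 1 ⟨by norm_num, le_rfl⟩ (by rw [ha1]; linarith)
      linarith
    · exact h
  -- critical equation
  have hcrit : a + 2*(b - a)*c - 3*b*c^2 = 0 := by rw [← hD c]; exact hf.crit
  have hR : 0 < (1 - c) * (a + b * c) := by
    have h := hfc
    rw [hF c] at h
    nlinarith [h, hc0]
  have ia : a * (1 - c)^2 = (1 - c) * (a + b * c) * (2 - 3*c) := by
    linear_combination (c - 1) * hcrit
  have ib : b * c * (1 - c)^2 = (1 - c) * (a + b * c) * (2*c - 1) := by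
    linear_combination (1 - c) * hcrit
  have hc23 : c < 2/3 := by
    have h2 : 0 < a * (1 - c)^2 := mul_pos hapos (pow_pos (by linarith) 2)
    rw [ia] at h2
    nlinarith [h2, hR]
  have hc13 : 1/3 < c := by
    have iab : (a + b) * (c * (1 - c)^2) = (1 - c) * (a + b * c) * ((1 - c) * (3*c - 1)) := by
      linear_combination c * ia + ib
    have h2 : 0 < (a + b) * (c * (1 - c)^2) :=
      mul_pos habpos (mul_pos hc0 (pow_pos (by linarith) 2))
    rw [iab] at h2
    nlinarith [h2, mul_pos hR (show (0:ℝ) < 1 - c by linarith)]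
  exact ⟨a, b, hF, hc13, hc23, hR, ia, ib⟩

set_option maxHeartbeats 2000000 in
theorem stmt16 (f g : Polynomial ℝ) (cf cg : ℝ) (hf : HClass f cf) (hg : HClass g cg)
    (hge : ∀ x ∈ Set.Icc (0:ℝ) 1, g.eval x ≤ f.eval x) (hfg : f ≠ g) :
    g.eval cg / cg < f.eval cf / cf := by
  obtain ⟨ag, bg, hGF, hu1, hu2, hRg, iag, ibg⟩ := hclass_facts g cg hg
  obtain ⟨af, bf, hFF, hv1, hv2, hRf, iaf, ibf⟩ := hclass_facts f cf hf
  have hu0 : 0 < cg := by linarith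
  have hu1' : cg < 1 := by linarith
  have hv0 : 0 < cf := by linarith
  have hv1' : cf < 1 := by linarith
  obtain ⟨s, hs⟩ : ∃ s : ℝ, s = 4*cg^2 - 3*cg + 1 := ⟨_, rfl⟩
  obtain ⟨xn, hxn⟩ : ∃ xn : ℝ, xn = cg^2*(3*cg - 1) := ⟨_, rfl⟩
  have hspos : 0 < s := by rw [hs]; nlinarith [sq_nonneg (2*cg - 3/4)]
  have hxnpos : 0 < xn := by rw [hxn]; nlinarith [sq_nonneg cg]
  obtain ⟨x, hx⟩ : ∃ x : ℝ, x = xn / s := ⟨_, rfl⟩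
  have hx0 : 0 < x := by rw [hx]; exact div_pos hxnpos hspos
  have hx1 : x < 1 := by
    rw [hx, div_lt_one hspos, hxn, hs]
    nlinarith [sq_nonneg (3*cg - 1), sq_nonneg cg]
  have hxs : x * s = xn := by rw [hx]; exact div_mul_cancel₀ xn hspos.ne'
  have hle := hge x ⟨hx0.le, hx1.le⟩
  rw [hGF x, hFF x] at hle
  have hxx : 0 < x * (1 - x) := mul_pos hx0 (by linarith)
  have hAB : ag + bg*x ≤ af + bf*x :=
    (mul_le_mul_iff_right₀ hxx).mp (by linarith [hle])
  have hAB' : ag*s + bg*xn ≤ af*s + bf*xn := by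
    have h := mul_le_mul_of_nonneg_right hAB hspos.le
    calc ag*s + bg*xn = (ag + bg*x)*s := by rw [← hxs]; ring
      _ ≤ (af + bf*x)*s := h
      _ = af*s + bf*xn := by rw [← hxs]; ring
  obtain ⟨Rg, hRgdef⟩ : ∃ R : ℝ, R = (1 - cg)*(ag + bg*cg) := ⟨_, rfl⟩
  obtain ⟨Rf, hRfdef⟩ : ∃ R : ℝ, R = (1 - cf)*(af + bf*cf) := ⟨_, rfl⟩
  obtain ⟨Kc, hKc⟩ : ∃ K : ℝ, K = cg*(2 - 3*cg)*s + (2*cg - 1)*xn := ⟨_, rfl⟩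
  obtain ⟨Kd, hKd⟩ : ∃ K : ℝ, K = cf*(2 - 3*cf)*s + (2*cf - 1)*xn := ⟨_, rfl⟩
  have hB : (ag*s + bg*xn)*(cg*(1 - cg)^2) = Rg*Kc := by
    rw [hKc, hRgdef]; linear_combination s*cg*iag + xn*ibg
  have hC : (af*s + bf*xn)*(cf*(1 - cf)^2) = Rf*Kd := by
    rw [hKd, hRfdef]; linear_combination s*cf*iaf + xn*ibf
  have hup : 0 < cg*(1 - cg)^2 := mul_pos hu0 (pow_pos (by linarith) 2)
  have hvp : 0 < cf*(1 - cf)^2 := mul_pos hv0 (pow_pos (by linarith) 2)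
  have hchain : Rg*Kc*(cf*(1 - cf)^2) ≤ Rf*Kd*(cg*(1 - cg)^2) := by
    have h2 := mul_le_mul_of_nonneg_right hAB' (mul_pos hup hvp).le
    calc Rg*Kc*(cf*(1 - cf)^2) = (ag*s + bg*xn)*(cg*(1 - cg)^2)*(cf*(1 - cf)^2) := by
          rw [hB]
      _ ≤ (af*s + bf*xn)*(cg*(1 - cg)^2)*(cf*(1 - cf)^2) := by
          simp only [mul_assoc] at h2 ⊢; exact h2
      _ = Rf*Kd*(cg*(1 - cg)^2) := by linear_combination cg*(1 - cg)^2*hC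
  have hid : Kc*(cf*(1 - cf)^2) - Kd*(cg*(1 - cg)^2) =
      (cg - cf)^2*(cg*(1 - cg)*(2*cf*(3*cg^2 - 3*cg + 1) + (3*cg - 1)*(1 - cg))) := by
    rw [hKc, hKd, hs, hxn]; ring
  have hquad : 0 < 3*cg^2 - 3*cg + 1 := by nlinarith [sq_nonneg (2*cg - 1)]
  have hbr : 0 < cg*(1 - cg)*(2*cf*(3*cg^2 - 3*cg + 1) + (3*cg - 1)*(1 - cg)) := by
    have h1 : 0 < 2*cf*(3*cg^2 - 3*cg + 1) := by positivity
    have h2 : 0 < (3*cg - 1)*(1 - cg) := mul_pos (by linarith) (by linarith)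
    have h3 : 0 < cg*(1 - cg) := mul_pos hu0 (by linarith)
    exact mul_pos h3 (by linarith)
  have hKdle : Kd*(cg*(1 - cg)^2) ≤ Kc*(cf*(1 - cf)^2) := by
    have h9 : 0 ≤ Kc*(cf*(1 - cf)^2) - Kd*(cg*(1 - cg)^2) := by
      rw [hid]; exact mul_nonneg (sq_nonneg _) hbr.le
    linarith [h9]
  have hKcpos : 0 < Kc := by
    have he : Kc = 2*cg*(1 - cg)*(3*cg^2 - 3*cg + 1) := by rw [hKc, hs, hxn]; ring
    rw [he]
    have := mul_pos (mul_pos (mul_pos (by norm_num : (0:ℝ) < 2) hu0)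
      (show (0:ℝ) < 1 - cg by linarith)) hquad
    linarith [this]
  have hT : 0 < Kc*(cf*(1 - cf)^2) := mul_pos hKcpos hvp
  have hRgpos : 0 < Rg := by rw [hRgdef]; exact hRg
  have hRfpos : 0 < Rf := by rw [hRfdef]; exact hRf
  have hRgRf : Rg ≤ Rf := by
    have h1 : Rf*(Kd*(cg*(1 - cg)^2)) ≤ Rf*(Kc*(cf*(1 - cf)^2)) :=
      mul_le_mul_of_nonneg_left hKdle hRfpos.le
    have h2 : Rg*(Kc*(cf*(1 - cf)^2)) ≤ Rf*(Kc*(cf*(1 - cf)^2)) := by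
      linarith [hchain, h1]
    exact le_of_mul_le_mul_right (by linarith [h2]) hT
  have hstrict : Rg < Rf := by
    rcases lt_or_eq_of_le hRgRf with h | h
    · exact h
    · exfalso
      have hEq1 : Rf*(Kd*(cg*(1 - cg)^2)) = Rf*(Kc*(cf*(1 - cf)^2)) := by
        have h1 : Rf*(Kd*(cg*(1 - cg)^2)) ≤ Rf*(Kc*(cf*(1 - cf)^2)) :=
          mul_le_mul_of_nonneg_left hKdle hRfpos.le
        have h2 : Rg*(Kc*(cf*(1 - cf)^2)) ≤ Rf*(Kd*(cg*(1 - cg)^2)) := by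
          linarith [hchain]
        rw [h] at h2
        linarith [h1, h2]
      have hEq2 : Kd*(cg*(1 - cg)^2) = Kc*(cf*(1 - cf)^2) :=
        mul_left_cancel₀ hRfpos.ne' hEq1
      have hsq : (cg - cf)^2*(cg*(1 - cg)*(2*cf*(3*cg^2 - 3*cg + 1) + (3*cg - 1)*(1 - cg))) = 0 := by
        rw [← hid, hEq2]; ring
      have hcc : cg = cf := by
        have h5 : (cg - cf)^2 = 0 := by
          rcases mul_eq_zero.mp hsq with h' | h'
          · exact h'
          · exact absurd h' hbr.ne'
        have := pow_eq_zero_iff (n := 2) (by norm_num) |>.mp h5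
        linarith [this]
      have hRR : (1 - cg)*(ag + bg*cg) = (1 - cf)*(af + bf*cf) := by
        rw [← hRgdef, ← hRfdef, h]
      have haf : ag = af := by
        have e1 : ag*(1 - cg)^2 = af*(1 - cg)^2 := by
          rw [iag, hRR, hcc, iaf]
        exact mul_right_cancel₀ (pow_ne_zero 2 (by intro h'; linarith : (1:ℝ) - cg ≠ 0)) e1
      have hbf : bg = bf := by
        have e1 : bg*cg*(1 - cg)^2 = bf*cg*(1 - cg)^2 := by
          rw [ibg, hRR, hcc, ibf]
        have h2 : bg*(cg*(1 - cg)^2) = bf*(cg*(1 - cg)^2) := by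
          linear_combination e1
        exact mul_right_cancel₀ hup.ne' h2
      apply hfg
      apply Polynomial.funext
      intro r
      rw [hFF r, hGF r, haf, hbf]
  have hstrict' : (1 - cg)*(ag + bg*cg) < (1 - cf)*(af + bf*cf) := by
    rw [← hRgdef, ← hRfdef]; exact hstrict
  have hgc : g.eval cg = cg*(1 - cg)*(ag + bg*cg) := hGF cg
  have hfc2 : f.eval cf = cf*(1 - cf)*(af + bf*cf) := hFF cf
  rw [hgc, hfc2, div_lt_div_iff₀ hu0 hv0]
  linarith [mul_lt_mul_of_pos_left hstrict' (mul_pos hu0 hv0)]
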